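/- An fs-module M is Artinian if and only if M has finite hollow dimension. -/

import Mathlib

/-- A submodule `N` of `M` is small (superfluous): `N + A = M` implies `A = M`. -/
def IsSmallSubmodule {R M : Type*} [Ring R] [AddCommGroup M] [Module R M]
    (N : Submodule R M) : Prop :=
  ∀ A : Submodule R M, N ⊔ A = ⊤ → A = ⊤

/-- `M` is an fs-module: it has only finitely many small submodules. -/
def IsFsModule (R M : Type*) [Ring R] [AddCommGroup M] [Module R M] : Prop :=
  {N : Submodule R M | IsSmallSubmodule N}.Finite

/-- The radical of `M`, as the sum of all small submodules of `M`. -/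
def modRad (R M : Type*) [Ring R] [AddCommGroup M] [Module R M] : Submodule R M :=
  sSup {N : Submodule R M | IsSmallSubmodule N}

/-- The radical of `M`, as the intersection of all maximal submodules of `M`. -/
def modRad' (R M : Type*) [Ring R] [AddCommGroup M] [Module R M] : Submodule R M :=
  sInf {N : Submodule R M | IsCoatom N}

/-- The socle of `M`: the sum of all minimal (simple) submodules of `M`. -/
def modSoc (R M : Type*) [Ring R] [AddCommGroup M] [Module R M] : Submodule R M :=
  sSup {N : Submodule R M | IsAtom N}

/-- `M` has finite hollow dimension: for every descending chain `N₁ ⊇ N₂ ⊇ ⋯`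
there is `n` such that `Nₙ / N_k` is small in `M / N_k` for all `k ≥ n`. -/
def HasFiniteHollowDim (R M : Type*) [Ring R] [AddCommGroup M] [Module R M] : Prop :=
  ∀ N : ℕ → Submodule R M, (∀ i j, i ≤ j → N j ≤ N i) →
    ∃ n, ∀ k, n ≤ k → IsSmallSubmodule (Submodule.map (N k).mkQ (N n))

/-- `M` has finite Goldie dimension: it contains no infinite direct sum of
nonzero submodules. -/
def HasFiniteGoldieDim (R M : Type*) [Ring R] [AddCommGroup M] [Module R M] : Prop :=
  ¬ ∃ f : ℕ → Submodule R M, (∀ i, f i ≠ ⊥) ∧ iSupIndep f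

section Aux

variable {R M : Type*} [Ring R] [AddCommGroup M] [Module R M]

lemma isSmall_bot : IsSmallSubmodule (⊥ : Submodule R M) := by
  intro A hA; simpa using hA

lemma isSmall_of_le {K N : Submodule R M} (hKN : K ≤ N) (hN : IsSmallSubmodule N) :
    IsSmallSubmodule K := by
  intro A hA
  exact hN A (top_unique (hA ▸ sup_le_sup_right hKN A))

lemma isSmall_sup {K N : Submodule R M} (hK : IsSmallSubmodule K)
    (hN : IsSmallSubmodule N) : IsSmallSubmodule (K ⊔ N) := by
  intro A hA
  rw [sup_assoc] at hA
  exact hN A (hK (N ⊔ A) hA)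

lemma isSmall_sSup_of_finite {s : Set (Submodule R M)} (hs : s.Finite)
    (h : ∀ N ∈ s, IsSmallSubmodule N) : IsSmallSubmodule (sSup s) := by
  refine Set.Finite.induction_on_subset (motive := fun t _ => IsSmallSubmodule (sSup t)) s hs ?_ ?_
  · rw [sSup_empty]; exact isSmall_bot
  · intro a t haS _ _ iht
    rw [sSup_insert]
    exact isSmall_sup (h a haS) iht

open Classical in
/-- The auxiliary descending chain shrinking a candidate weak supplement of `P`. -/
noncomputable def chainV (P : Submodule R M) : ℕ → Submodule R M
  | 0 => ⊤
  | (k + 1) =>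
      if h : ∃ A, (P ⊓ chainV P k) ⊔ A = ⊤ ∧ A ≠ ⊤ then chainV P k ⊓ h.choose
      else chainV P k

lemma chainV_succ_le (P : Submodule R M) (k : ℕ) : chainV P (k + 1) ≤ chainV P k := by
  rw [chainV]
  split
  · exact inf_le_left
  · exact le_rfl

lemma chainV_antitone (P : Submodule R M) : ∀ i j, i ≤ j → chainV P j ≤ chainV P i := by
  intro i j hij
  induction j with
  | zero => simp [Nat.le_zero.mp hij]
  | succ k ih =>
    rcases Nat.lt_or_ge i (k + 1) with h | h
    · exact (chainV_succ_le P k).trans (ih (Nat.lt_succ_iff.mp h))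
    · have : i = k + 1 := le_antisymm hij h
      simp [this]

lemma chainV_sup (P : Submodule R M) (k : ℕ) : P ⊔ chainV P k = ⊤ := by
  induction k with
  | zero => simp [chainV]
  | succ k ih =>
    rw [chainV]
    split
    · next h =>
      obtain ⟨hA1, _⟩ := h.choose_spec
      have hmod : chainV P k = (P ⊓ chainV P k) ⊔ (h.choose ⊓ chainV P k) := by
        have := sup_inf_assoc_of_le (x := P ⊓ chainV P k) (z := chainV P k) h.choose
          (inf_le_right : P ⊓ chainV P k ≤ chainV P k)
        rw [← this, hA1, top_inf_eq]
      calc P ⊔ (chainV P k ⊓ h.choose)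
          = P ⊔ (h.choose ⊓ chainV P k) := by rw [inf_comm]
        _ = (P ⊔ (P ⊓ chainV P k)) ⊔ (h.choose ⊓ chainV P k) := by
              rw [sup_of_le_left (inf_le_left : P ⊓ chainV P k ≤ P)]
        _ = P ⊔ ((P ⊓ chainV P k) ⊔ (h.choose ⊓ chainV P k)) := by rw [sup_assoc]
        _ = P ⊔ chainV P k := by rw [← hmod]
        _ = ⊤ := ih
    · exact ih

/-- In a module of finite hollow dimension, every submodule has a weak supplement. -/
lemma exists_weak_supplement (hh : HasFiniteHollowDim R M) (P : Submodule R M) :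
    ∃ V : Submodule R M, P ⊔ V = ⊤ ∧ IsSmallSubmodule (P ⊓ V) := by
  obtain ⟨n, hn⟩ := hh (chainV P) (chainV_antitone P)
  refine ⟨chainV P n, chainV_sup P n, ?_⟩
  by_contra hsmall
  have h : ∃ A, (P ⊓ chainV P n) ⊔ A = ⊤ ∧ A ≠ ⊤ := by
    by_contra hc
    push_neg at hc
    exact hsmall fun A hA => hc A hA
  have hVn1 : chainV P (n + 1) = chainV P n ⊓ h.choose := by
    rw [chainV, dif_pos h]
  obtain ⟨hA1, hA2⟩ := h.choose_spec
  have hsmallq := hn (n + 1) (Nat.le_succ n)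
  have hsup : chainV P n ⊔ h.choose = ⊤ :=
    top_unique (le_trans hA1.ge
      (sup_le_sup_right (inf_le_right : P ⊓ chainV P n ≤ chainV P n) _))
  have hmap : Submodule.map (chainV P (n + 1)).mkQ (chainV P n) ⊔
      Submodule.map (chainV P (n + 1)).mkQ h.choose = ⊤ := by
    rw [← Submodule.map_sup, hsup, Submodule.map_top, Submodule.range_mkQ]
  have htop := hsmallq _ hmap
  have hcomap : chainV P (n + 1) ⊔ h.choose = ⊤ := by
    have h2 := congrArg (Submodule.comap (chainV P (n + 1)).mkQ) htop
    rwa [Submodule.comap_map_mkQ, Submodule.comap_top] at h2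
  have hle : chainV P (n + 1) ≤ h.choose := le_trans hVn1.le inf_le_right
  exact hA2 ((sup_eq_right.mpr hle).symm.trans hcomap)

end Aux

theorem fs_artinian_iff_finite_hollow (R M : Type*) [Ring R] [AddCommGroup M]
    [Module R M] (hfs : IsFsModule R M) :
    IsArtinian R M ↔ HasFiniteHollowDim R M := by
  constructor
  · intro hart N hmono
    obtain ⟨n, hn⟩ := IsArtinian.monotone_stabilizes
      (⟨fun k => OrderDual.toDual (N k), fun i j h => hmono i j h⟩ : ℕ →o (Submodule R M)ᵒᵈ)
    refine ⟨n, fun k hk => ?_⟩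
    have hNk : N n = N k := congrArg OrderDual.ofDual (hn k hk)
    have hbot : Submodule.map (N k).mkQ (N n) = ⊥ := by
      rw [hNk]
      refine le_bot_iff.mp (Submodule.map_le_iff_le_comap.mpr ?_)
      rw [Submodule.comap_bot, Submodule.ker_mkQ]
    intro A hA
    rw [hbot, bot_sup_eq] at hA
    exact hA
  · intro hh
    rw [← monotone_stabilizes_iff_artinian]
    intro f
    set N : ℕ → Submodule R M := fun k => OrderDual.ofDual (f k) with hNdef
    have hmono : ∀ i j, i ≤ j → N j ≤ N i := fun i j h => f.monotone h
    -- the radical, as a small submodule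
    set Rad : Submodule R M := sSup {K : Submodule R M | IsSmallSubmodule K} with hRad
    have hRadSmall : IsSmallSubmodule Rad :=
      isSmall_sSup_of_finite hfs (fun _ h => h)
    have hle_rad : ∀ K : Submodule R M, IsSmallSubmodule K → K ≤ Rad :=
      fun K hK => le_sSup hK
    -- Step 1 : the chain of suprema with Rad stabilizes
    obtain ⟨n₁, hn₁⟩ := hh (fun k => N k ⊔ Rad)
      (fun i j h => sup_le_sup_right (hmono i j h) Rad)
    have hstab1 : ∀ k, n₁ ≤ k → N k ⊔ Rad = N n₁ ⊔ Rad := by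
      intro k hk
      obtain ⟨V, hV1, hV2⟩ := exists_weak_supplement hh (N n₁ ⊔ Rad)
      have hPkP : N k ⊔ Rad ≤ N n₁ ⊔ Rad := sup_le_sup_right (hmono n₁ k hk) Rad
      have hsmallq := hn₁ k hk
      -- A := V ⊔ (N k ⊔ Rad)
      have hmap : Submodule.map ((N k ⊔ Rad)).mkQ (N n₁ ⊔ Rad) ⊔
          Submodule.map ((N k ⊔ Rad)).mkQ (V ⊔ (N k ⊔ Rad)) = ⊤ := by
        rw [← Submodule.map_sup, ← sup_assoc, sup_comm (N n₁ ⊔ Rad) V, sup_assoc,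
          sup_comm V]
        rw [sup_eq_left.mpr hPkP, sup_comm, hV1, Submodule.map_top, Submodule.range_mkQ]
      have htop := hsmallq _ hmap
      have hAtop : V ⊔ (N k ⊔ Rad) = ⊤ := by
        have h2 := congrArg (Submodule.comap ((N k ⊔ Rad)).mkQ) htop
        rw [Submodule.comap_map_mkQ, Submodule.comap_top,
          sup_eq_right.mpr (le_sup_right : N k ⊔ Rad ≤ V ⊔ (N k ⊔ Rad))] at h2
        exact h2
      -- modularity : N n₁ ⊔ Rad = ((N n₁ ⊔ Rad) ⊓ V) ⊔ (N k ⊔ Rad) ≤ N k ⊔ Rad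
      have hmod : ((N n₁ ⊔ Rad) ⊓ V) ⊔ (N k ⊔ Rad) = (N n₁ ⊔ Rad) ⊓ (V ⊔ (N k ⊔ Rad)) :=
        inf_sup_assoc_of_le V hPkP
      have hsmall_le : (N n₁ ⊔ Rad) ⊓ V ≤ N k ⊔ Rad :=
        le_trans (hle_rad _ hV2) le_sup_right
      have : N n₁ ⊔ Rad ≤ N k ⊔ Rad := by
        calc N n₁ ⊔ Rad = (N n₁ ⊔ Rad) ⊓ (V ⊔ (N k ⊔ Rad)) := by rw [hAtop, inf_top_eq]
          _ = ((N n₁ ⊔ Rad) ⊓ V) ⊔ (N k ⊔ Rad) := hmod.symm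
          _ ≤ N k ⊔ Rad := sup_le hsmall_le le_rfl
      exact le_antisymm hPkP this
    -- Step 2 : the chain of infima with Rad stabilizes (finitely many smalls)
    have hrange : Set.range (fun k => N k ⊓ Rad) ⊆ {K : Submodule R M | IsSmallSubmodule K} := by
      rintro _ ⟨k, rfl⟩
      exact isSmall_of_le inf_le_right hRadSmall
    have hfin : (Set.range (fun k => N k ⊓ Rad)).Finite := hfs.subset hrange
    obtain ⟨a, ha, hamin⟩ : ∃ a ∈ Set.range (fun k => N k ⊓ Rad),
        ∀ a' ∈ Set.range (fun k => N k ⊓ Rad), a' ≤ a → a = a' := by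
      obtain ⟨a, ha, hm⟩ := Set.Finite.exists_minimalFor id _ hfin ⟨N 0 ⊓ Rad, 0, rfl⟩
      exact ⟨a, ha, fun a' ha' hle => le_antisymm (hm ha' hle) hle⟩
    obtain ⟨n₂, rfl⟩ := ha
    have hstab2 : ∀ k, n₂ ≤ k → N k ⊓ Rad = N n₂ ⊓ Rad := by
      intro k hk
      exact (hamin _ ⟨k, rfl⟩ (inf_le_inf_right Rad (hmono n₂ k hk))).symm
    -- combine
    refine ⟨max n₁ n₂, fun m hm => ?_⟩
    have h1 : n₁ ≤ max n₁ n₂ := le_max_left _ _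
    have h2 : n₂ ≤ max n₁ n₂ := le_max_right _ _
    have hNeq : N m = N (max n₁ n₂) := by
      refine eq_of_le_of_inf_le_of_sup_le (hmono _ _ hm)
        (le_of_eq ((hstab2 _ h2).trans (hstab2 m (h2.trans hm)).symm))
        (le_of_eq ((hstab1 _ h1).trans (hstab1 m (h1.trans hm)).symm))
    exact (OrderDual.ofDual.injective hNeq).symm
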